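/- Let n, m ≥ 1 be integers and 0 < α < mn. There exists a constant C, depending only on m, n and α, with the following property. Let r > 0, M ≥ 8m, x_0, y_1, …, y_m ∈ ℝ^n, and suppose that |x_0 − y_{j_0}| ≥ M r for at least one index j_0. If f_1, …, f_m are nonnegative measurable functions on ℝ^n with f_j supported in B(y_j, r) for each j, then for all x, x' ∈ B(x_0, r): |I_α(f_1,…,f_m)(x) − I_α(f_1,…,f_m)(x')| ≤ C |x − x'| (M r)^{α − mn − 1} ∏_{j=1}^m ∫_{ℝ^n} f_j(y) dy. -/

import Mathlib

open MeasureTheory ENNReal Filter Metric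

noncomputable section

/-- Euclidean space `ℝⁿ`. -/
abbrev En (n : ℕ) : Type := EuclideanSpace ℝ (Fin n)

/-- The multilinear fractional integral operator `I_α`. -/
def mfi (n m : ℕ) (α : ℝ) (f : Fin m → En n → ℝ) (x : En n) : ℝ :=
  ∫ y : Fin m → En n, (∏ j, f j (y j)) / (∑ j, dist x (y j)) ^ ((m * n : ℝ) - α)

/-- The `l`-th partial adjoint `(I_α^*)_l`. -/
def mfiAdj (n m : ℕ) (α : ℝ) (l : Fin m) (f : Fin m → En n → ℝ) (x : En n) : ℝ :=
  ∫ y : Fin m → En n, (∏ j, f j (y j)) /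
    (dist (y l) x + ∑ j ∈ Finset.univ.erase l, dist (y l) (y j)) ^ ((m * n : ℝ) - α)

/-- The multilinear "multiplication" operator `Π_l`. -/
def PiOp (n m : ℕ) (α : ℝ) (l : Fin m) (g : En n → ℝ) (h : Fin m → En n → ℝ)
    (x : En n) : ℝ :=
  h l x * mfiAdj n m α l (Function.update h l g) x - g x * mfi n m α h x

/-- The `l`-th commutator `[b, I_α]_l`. -/
def commOp (n m : ℕ) (α : ℝ) (l : Fin m) (b : En n → ℝ) (f : Fin m → En n → ℝ)
    (x : En n) : ℝ :=
  mfi n m α (Function.update f l (fun y => b y * f l y)) x - b x * mfi n m α f x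

/-- The weighted Lebesgue norm `‖f‖_{L^p(w)}`. -/
def wNorm (n : ℕ) (p : ℝ) (w f : En n → ℝ) : ℝ≥0∞ :=
  (∫⁻ x, ENNReal.ofReal (|f x| ^ p * w x)) ^ (1 / p)

/-- The (axis-parallel, closed) cube with corner `c` and side `r`. -/
def cube (n : ℕ) (c : En n) (r : ℝ) : Set (En n) := {y | ∀ i, c i ≤ y i ∧ y i ≤ c i + r}

/-- The weight `μ_{ω⃗} = ∏ ω_i^q`. -/
def muw (n m : ℕ) (q : ℝ) (ω : Fin m → En n → ℝ) (x : En n) : ℝ := ∏ i, ω i x ^ q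

/-- The multilinear weight class `A_{P⃗,q}`. -/
def MemApq (n m : ℕ) (p : Fin m → ℝ) (q : ℝ) (ω : Fin m → En n → ℝ) : Prop :=
  (∀ i x, 0 ≤ ω i x) ∧ (∀ i, LocallyIntegrable (ω i) volume) ∧
  ∃ A : ℝ≥0∞, A ≠ ⊤ ∧ ∀ (c : En n) (r : ℝ), 0 < r →
    ((volume (cube n c r))⁻¹ * ∫⁻ x in cube n c r, ENNReal.ofReal (muw n m q ω x)) *
      ∏ i, (((volume (cube n c r))⁻¹ *
          ∫⁻ x in cube n c r, ENNReal.ofReal (ω i x ^ (-(p i / (p i - 1))))) ^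
        (q / (p i / (p i - 1)))) ≤ A

/-- A `(1,t,0)`-atom (with `t = ⊤` allowed). -/
def Atom10 (n : ℕ) (t : ℝ≥0∞) (a : En n → ℝ) : Prop :=
  Measurable a ∧ ∃ (c : En n) (r : ℝ), 0 < r ∧ (∀ x, x ∉ ball c r → a x = 0) ∧
    eLpNorm a t volume ≤ (volume (ball c r)) ^ (1 / t.toReal - 1) ∧
    (∫ x, a x) = 0

/-- The atomic `H^1` norm of `f`. -/
def H1norm (n : ℕ) (f : En n → ℝ) : ℝ≥0∞ :=
  ⨅ (lam : ℕ → ℝ) (a : ℕ → En n → ℝ)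
    (_ : (∀ k, Atom10 n ⊤ (a k)) ∧
      Tendsto (fun K => eLpNorm (fun x => f x - ∑ k ∈ Finset.range K, lam k * a k x) 1 volume)
        atTop (nhds 0)),
    ∑' k, ENNReal.ofReal |lam k|

/-- The `BMO` norm of `b`. -/
def BMOnorm (n : ℕ) (b : En n → ℝ) : ℝ≥0∞ :=
  ⨆ (c : En n) (r : ℝ) (_ : 0 < r),
    (volume (cube n c r))⁻¹ *
      ∫⁻ x in cube n c r, ENNReal.ofReal |b x - ⨍ y in cube n c r, b y|


/-- Lipschitz-type bound for `t ↦ t ^ (-β)` on `[c, ∞)`. -/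
lemma aux_rpow_lip {β c a b : ℝ} (hβ : 0 < β) (hc : 0 < c) (ha : c ≤ a) (hb : c ≤ b) :
    |a ^ (-β) - b ^ (-β)| ≤ β * c ^ (-β - 1) * |a - b| := by
  have h := Convex.norm_image_sub_le_of_norm_hasDerivWithin_le
    (f := fun t : ℝ => t ^ (-β)) (f' := fun t : ℝ => (-β) * t ^ (-β - 1))
    (s := Set.Ici c) (C := β * c ^ (-β - 1)) ?_ ?_ (convex_Ici c) hb ha
  · simpa [Real.norm_eq_abs] using h
  · intro t ht
    have ht0 : t ≠ 0 := by
      have : (0:ℝ) < t := lt_of_lt_of_le hc ht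
      exact ne_of_gt this
    exact (Real.hasDerivAt_rpow_const (Or.inl ht0)).hasDerivWithinAt
  · intro t ht
    have ht0 : (0:ℝ) < t := lt_of_lt_of_le hc ht
    have hle : t ^ (-β - 1) ≤ c ^ (-β - 1) :=
      Real.rpow_le_rpow_of_nonpos hc ht (by linarith)
    have h1 : |(-β) * t ^ (-β - 1)| = β * t ^ (-β - 1) := by
      rw [abs_mul, abs_neg, abs_of_pos hβ, abs_of_pos (Real.rpow_pos_of_pos ht0 _)]
    rw [Real.norm_eq_abs, h1]
    exact mul_le_mul_of_nonneg_left hle hβ.le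


/-- A Tonelli-type product formula for `lintegral` on a finite product space. -/
lemma aux_lintegral_fin_prod {E : Type*} [MeasureSpace E] [SigmaFinite (volume : Measure E)] :
    ∀ {k : ℕ} (f : Fin k → E → ℝ≥0∞), (∀ i, Measurable (f i)) →
      ∫⁻ x : Fin k → E, ∏ i, f i (x i) = ∏ i, ∫⁻ x, f i x := by
  intro k
  induction k with
  | zero =>
      intro f hf
      simp [volume_pi, lintegral_const, Measure.pi_empty_univ]
  | succ k ih =>
      intro f hf
      have hmp := (measurePreserving_piFinSuccAbove (fun _ : Fin (k+1) => (volume : Measure E)) 0).symm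
      have hmeas : Measurable (fun x : Fin (k+1) → E => ∏ i, f i (x i)) :=
        Finset.measurable_prod _ fun i _ => (hf i).comp (measurable_pi_apply i)
      rw [volume_pi, ← hmp.lintegral_comp hmeas]
      have heq : ∀ p : E × (Fin k → E),
          (fun x : Fin (k+1) → E => ∏ i, f i (x i))
            ((MeasurableEquiv.piFinSuccAbove (fun _ : Fin (k+1) => E) 0).symm p)
          = f 0 p.1 * ∏ i : Fin k, f i.succ (p.2 i) := by
        intro p
        simp_rw [MeasurableEquiv.piFinSuccAbove_symm_apply, Fin.insertNthEquiv,
          Fin.prod_univ_succ, Fin.insertNth_zero]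
        simp [Fin.zero_succAbove, Function.comp_def, Fin.cons_zero, Fin.cons_succ]
      simp_rw [heq]
      have h2 : AEMeasurable (fun x : Fin k → E => ∏ i : Fin k, f i.succ (x i))
          (Measure.pi fun _ => (volume : Measure E)) :=
        (Finset.measurable_prod _ fun i _ =>
          (hf i.succ).comp (measurable_pi_apply i)).aemeasurable
      rw [lintegral_prod_mul ((hf 0).aemeasurable) h2, ← volume_pi,
        ih (fun i => f i.succ) (fun i => hf i.succ), Fin.prod_univ_succ]

/-- Regularity of `I_α(f₁, …, f_m)` on the ball `B(x₀, r)` when at least one of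
the supporting balls `B(y_j, r)` is at distance `≥ M r` from `x₀`. -/
theorem mfi_regularity (n m : ℕ) (hn : 1 ≤ n) (hm : 1 ≤ m) (α : ℝ)
    (hα0 : 0 < α) (hα1 : α < m * n) :
    ∃ C : ℝ, 0 < C ∧ ∀ (r M : ℝ) (x0 : En n) (y : Fin m → En n),
      0 < r → 8 * m ≤ M → (∃ j0, M * r ≤ dist x0 (y j0)) →
      ∀ f : Fin m → En n → ℝ,
        (∀ j, Measurable (f j)) → (∀ j x, 0 ≤ f j x) →
        (∀ j, ∀ z, z ∉ ball (y j) r → f j z = 0) →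
        ∀ x ∈ ball x0 r, ∀ x' ∈ ball x0 r,
          |mfi n m α f x - mfi n m α f x'| ≤
            C * dist x x' * (M * r) ^ (α - m * n - 1) * ∏ j, ∫ z, f j z := by
  have hm1 : (1:ℝ) ≤ (m:ℝ) := by exact_mod_cast hm
  have hmne : Nonempty (Fin m) := ⟨⟨0, hm⟩⟩
  set β : ℝ := (m:ℝ) * (n:ℝ) - α with hβdef
  have hβ : 0 < β := by
    have : α < (m:ℝ) * (n:ℝ) := by exact_mod_cast hα1
    simp only [hβdef]; linarith
  refine ⟨(m:ℝ) * β * 2 ^ (β + 1), by positivity, ?_⟩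
  intro r M x0 y hr hM hj f hfm hf0 hfs x hx x' hx'
  obtain ⟨j0, hj0⟩ := hj
  have h8M : (8:ℝ) ≤ M := le_trans (by linarith) hM
  have hMr : 0 < M * r := by nlinarith
  have hc : 0 < M * r / 2 := by linarith
  set P : (Fin m → En n) → ℝ := fun z => ∏ j, f j (z j) with hPdef
  have hP0 : ∀ z, 0 ≤ P z := fun z => Finset.prod_nonneg fun j _ => hf0 j (z j)
  have hPm : Measurable P := Finset.measurable_prod _ fun j _ => (hfm j).comp (measurable_pi_apply j)
  set K : En n → (Fin m → En n) → ℝ := fun u z => (∑ j, dist u (z j)) ^ (-β) with hKdef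
  have hSm : ∀ u : En n, Measurable fun z : Fin m → En n => ∑ j, dist u (z j) := by
    intro u
    exact (continuous_finset_sum _ fun j _ =>
      Continuous.dist continuous_const (continuous_apply j)).measurable
  have hrpowm : Measurable fun t : ℝ => t ^ (-β) := by measurability
  have hKm : ∀ u : En n, Measurable (K u) := fun u => hrpowm.comp (hSm u)
  have hKnonneg : ∀ u z, 0 ≤ K u z :=
    fun u z => Real.rpow_nonneg (Finset.sum_nonneg fun j _ => dist_nonneg) _
  -- lower bound for the kernel denominator on the support
  have hS : ∀ u ∈ ball x0 r, ∀ z : Fin m → En n, f j0 (z j0) ≠ 0 →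
      M * r / 2 ≤ ∑ j, dist u (z j) := by
    intro u hu z hz
    have hzball : z j0 ∈ ball (y j0) r := by
      by_contra h; exact hz (hfs j0 _ h)
    have h1 : dist u (z j0) ≤ ∑ j, dist u (z j) :=
      Finset.single_le_sum (fun j _ => dist_nonneg) (Finset.mem_univ j0)
    have h2 : dist x0 (y j0) ≤ dist x0 u + dist u (z j0) + dist (z j0) (y j0) :=
      dist_triangle4 x0 u (z j0) (y j0)
    have h3 : dist x0 u < r := by rw [dist_comm]; exact mem_ball.mp hu
    have h4 : dist (z j0) (y j0) < r := mem_ball.mp hzball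
    have h8r : 8 * r ≤ M * r := by nlinarith
    linarith
  -- rewrite `mfi` as an integral of `P z * K u z`
  have hmfi : ∀ u : En n, mfi n m α f u = ∫ z, P z * K u z := by
    intro u
    unfold mfi
    congr 1
    funext z
    have hs0 : (0:ℝ) ≤ ∑ j, dist u (z j) := Finset.sum_nonneg fun j _ => dist_nonneg
    simp only [hKdef, hPdef]
    rw [Real.rpow_neg hs0, div_eq_mul_inv]
  -- pointwise bounds
  have hbd : ∀ u ∈ ball x0 r, ∀ z, ‖P z * K u z‖ ≤ (M*r/2) ^ (-β) * P z := by
    intro u hu z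
    by_cases hz : f j0 (z j0) = 0
    · have hP : P z = 0 := Finset.prod_eq_zero (Finset.mem_univ j0) hz
      simp [hP]
    · have h1 := hS u hu z hz
      have hKle : K u z ≤ (M*r/2) ^ (-β) :=
        Real.rpow_le_rpow_of_nonpos hc h1 (by linarith)
      rw [Real.norm_eq_abs, abs_of_nonneg (mul_nonneg (hP0 z) (hKnonneg u z)), mul_comm]
      exact mul_le_mul_of_nonneg_right hKle (hP0 z)
  have hdiff : ∀ z, ‖P z * K x z - P z * K x' z‖ ≤
      ((m:ℝ) * β * (M*r/2) ^ (-β-1) * dist x x') * P z := by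
    intro z
    by_cases hz : f j0 (z j0) = 0
    · have hP : P z = 0 := Finset.prod_eq_zero (Finset.mem_univ j0) hz
      simp [hP]
    · have ha := hS x hx z hz
      have hb := hS x' hx' z hz
      have hker := aux_rpow_lip hβ hc ha hb
      have hSd : |(∑ j, dist x (z j)) - (∑ j, dist x' (z j))| ≤ (m:ℝ) * dist x x' := by
        rw [← Finset.sum_sub_distrib]
        calc |∑ j, (dist x (z j) - dist x' (z j))|
            ≤ ∑ j, |dist x (z j) - dist x' (z j)| := Finset.abs_sum_le_sum_abs _ _
          _ ≤ ∑ _j : Fin m, dist x x' :=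
              Finset.sum_le_sum fun j _ => abs_dist_sub_le _ _ _
          _ = (m:ℝ) * dist x x' := by
              simp [Finset.sum_const, Finset.card_univ, nsmul_eq_mul]
      rw [Real.norm_eq_abs, ← mul_sub, abs_mul, abs_of_nonneg (hP0 z)]
      calc P z * |K x z - K x' z|
          ≤ P z * (β * (M*r/2) ^ (-β-1) * ((m:ℝ) * dist x x')) := by
            refine mul_le_mul_of_nonneg_left ?_ (hP0 z)
            refine le_trans hker ?_
            exact mul_le_mul_of_nonneg_left hSd (by positivity)
        _ = ((m:ℝ) * β * (M*r/2) ^ (-β-1) * dist x x') * P z := by ring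
  by_cases hall : ∀ j, Integrable (f j)
  · -- main case
    have hPint : Integrable P := by
      rw [hPdef]; exact Integrable.fintype_prod hall
    have hint : ∀ u ∈ ball x0 r, Integrable fun z => P z * K u z := by
      intro u hu
      refine Integrable.mono' (hPint.const_mul ((M*r/2) ^ (-β)))
        ((hPm.mul (hKm u)).aestronglyMeasurable) ?_
      exact Eventually.of_forall (hbd u hu)
    rw [hmfi x, hmfi x', ← integral_sub (hint x hx) (hint x' hx')]
    have hnorm : ‖∫ z, (P z * K x z - P z * K x' z)‖ ≤
        ∫ z, ((m:ℝ) * β * (M*r/2) ^ (-β-1) * dist x x') * P z :=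
      norm_integral_le_of_norm_le (hPint.const_mul _) (Eventually.of_forall hdiff)
    rw [Real.norm_eq_abs] at hnorm
    refine le_trans hnorm ?_
    rw [integral_const_mul]
    have hintP : ∫ z, P z = ∏ j, ∫ t, f j t := by
      rw [hPdef]; exact integral_fintype_prod_eq_prod f
    rw [hintP]
    have hexp : α - (m:ℝ)*(n:ℝ) - 1 = -β - 1 := by rw [hβdef]; ring
    have hsplit : (M*r/2 : ℝ) ^ (-β-1) = 2 ^ (β+1) * (M*r) ^ (-β-1) := by
      rw [show M*r/2 = (M*r) * (2:ℝ)⁻¹ by ring, Real.mul_rpow hMr.le (by norm_num),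
          Real.inv_rpow (by norm_num : (0:ℝ) ≤ 2), ← Real.rpow_neg (by norm_num : (0:ℝ) ≤ 2),
          show -(-β-1) = β+1 by ring]
      ring
    rw [hexp, hsplit]
    apply le_of_eq; ring
  · -- degenerate case: some `f j` is not integrable, both sides vanish
    push_neg at hall
    obtain ⟨j1, hj1⟩ := hall
    have claim : ∀ u ∈ ball x0 r, mfi n m α f u = 0 := by
      intro u hu
      by_cases hzero : ∃ k, f k =ᵐ[volume] 0
      · obtain ⟨k, hk⟩ := hzero
        have hnull : volume {t : En n | f k t ≠ 0} = 0 := by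
          have := hk
          rw [Filter.EventuallyEq, ae_iff] at this
          simpa using this
        have hpnull : volume {z : Fin m → En n | f k (z k) ≠ 0} = 0 := by
          have heq : {z : Fin m → En n | f k (z k) ≠ 0}
              = Function.eval k ⁻¹' {t : En n | f k t ≠ 0} := rfl
          rw [heq, volume_pi]
          exact Measure.pi_eval_preimage_null _ hnull
        have hae : ∀ᵐ z : Fin m → En n, f k (z k) = 0 := by
          rw [ae_iff]; simpa using hpnull
        rw [hmfi u]
        rw [integral_eq_zero_of_ae]
        filter_upwards [hae] with z hz
        have hP : P z = 0 := Finset.prod_eq_zero (Finset.mem_univ k) hz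
        simp [hP]
      · push_neg at hzero
        set g : Fin m → ℝ≥0∞ := fun k => ∫⁻ t, ENNReal.ofReal (f k t) with hgdef
        have hgm : ∀ k : Fin m, Measurable fun t : En n => ENNReal.ofReal (f k t) :=
          fun k => ENNReal.measurable_ofReal.comp (hfm k)
        have hgne : ∀ k, g k ≠ 0 := by
          intro k hk0
          apply hzero k
          rw [hgdef] at hk0
          have h0 := (lintegral_eq_zero_iff (hgm k)).mp hk0
          filter_upwards [h0] with t ht
          have ht' : ENNReal.ofReal (f k t) = 0 := ht
          rw [ENNReal.ofReal_eq_zero] at ht'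
          exact le_antisymm ht' (hf0 k t)
        have hgtop : g j1 = ⊤ := by
          by_contra htop
          apply hj1
          refine ⟨(hfm j1).aestronglyMeasurable, ?_⟩
          rw [hasFiniteIntegral_iff_norm]
          have heq : ∫⁻ t, ENNReal.ofReal ‖f j1 t‖ = g j1 := by
            rw [hgdef]
            exact lintegral_congr fun t => by rw [Real.norm_of_nonneg (hf0 j1 t)]
          rw [heq]
          exact lt_top_iff_ne_top.mpr htop
        have hPlint : ∫⁻ z : Fin m → En n, ENNReal.ofReal (P z) = ⊤ := by
          have hofP : ∀ z : Fin m → En n,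
              ENNReal.ofReal (P z) = ∏ j, ENNReal.ofReal (f j (z j)) := by
            intro z
            rw [hPdef]
            exact ENNReal.ofReal_prod_of_nonneg fun j _ => hf0 j (z j)
          simp_rw [hofP]
          rw [aux_lintegral_fin_prod (fun i t => ENNReal.ofReal (f i t)) hgm]
          rw [← Finset.mul_prod_erase _ _ (Finset.mem_univ j1)]
          have h1 : (∫⁻ t, ENNReal.ofReal (f j1 t)) = ⊤ := hgtop
          rw [h1]
          refine ENNReal.top_mul ?_
          refine Finset.prod_ne_zero_iff.mpr fun k _ => hgne k
        -- upper bound for the denominator on the support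
        set D : ℝ := ∑ j, (dist u (y j) + r) with hDdef
        have hD0 : 0 < D := by
          rw [hDdef]
          refine Finset.sum_pos (fun j _ => ?_) Finset.univ_nonempty
          have := dist_nonneg (x := u) (y := y j); linarith
        have hGnn : ∀ z, 0 ≤ P z * K u z := fun z => mul_nonneg (hP0 z) (hKnonneg u z)
        have hPbd : ∀ z, ENNReal.ofReal (P z) ≤
            ENNReal.ofReal (D ^ β) * ENNReal.ofReal (P z * K u z) := by
          intro z
          by_cases hz : P z = 0
          · simp [hz]
          · have hfz : ∀ j, f j (z j) ≠ 0 := by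
              intro j
              rw [hPdef] at hz
              exact Finset.prod_ne_zero_iff.mp hz j (Finset.mem_univ j)
            have hzball : ∀ j, z j ∈ ball (y j) r := fun j => by
              by_contra h; exact hfz j (hfs j _ h)
            have hSub : (∑ j, dist u (z j)) ≤ D := by
              rw [hDdef]
              refine Finset.sum_le_sum fun j _ => ?_
              have h5 : dist (z j) (y j) < r := mem_ball.mp (hzball j)
              calc dist u (z j) ≤ dist u (y j) + dist (y j) (z j) := dist_triangle _ _ _
                _ ≤ dist u (y j) + r := by rw [dist_comm (y j) (z j)]; linarith
            have hSlb := hS u hu z (hfz j0)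
            have hSpos : 0 < ∑ j, dist u (z j) := lt_of_lt_of_le hc hSlb
            have key : P z ≤ (P z * K u z) * D ^ β := by
              have hKz : K u z = ((∑ j, dist u (z j)) ^ β)⁻¹ := by
                simp only [hKdef]
                rw [Real.rpow_neg hSpos.le]
              have hrle : (∑ j, dist u (z j)) ^ β ≤ D ^ β :=
                Real.rpow_le_rpow hSpos.le hSub hβ.le
              have hrpos : 0 < (∑ j, dist u (z j)) ^ β := Real.rpow_pos_of_pos hSpos _
              rw [hKz]
              calc P z = (P z * ((∑ j, dist u (z j)) ^ β)⁻¹) * (∑ j, dist u (z j)) ^ β := by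
                    field_simp
                _ ≤ (P z * ((∑ j, dist u (z j)) ^ β)⁻¹) * D ^ β :=
                    mul_le_mul_of_nonneg_left hrle
                      (mul_nonneg (hP0 z) (inv_nonneg.mpr hrpos.le))
            calc ENNReal.ofReal (P z)
                ≤ ENNReal.ofReal ((P z * K u z) * D ^ β) := ENNReal.ofReal_le_ofReal key
              _ = ENNReal.ofReal (D ^ β) * ENNReal.ofReal (P z * K u z) := by
                  rw [mul_comm (P z * K u z) (D ^ β),
                    ENNReal.ofReal_mul (Real.rpow_nonneg hD0.le _)]
        have hGtop : ∫⁻ z, ENNReal.ofReal (P z * K u z) = ⊤ := by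
          by_contra hne
          have hle := lintegral_mono (μ := (volume : Measure (Fin m → En n))) hPbd
          rw [lintegral_const_mul' _ _ ENNReal.ofReal_ne_top, hPlint] at hle
          exact ENNReal.mul_ne_top ENNReal.ofReal_ne_top hne (top_le_iff.mp hle)
        have hnotint : ¬ Integrable (fun z => P z * K u z) := by
          intro hint
          have h2 := hint.2
          rw [hasFiniteIntegral_iff_norm] at h2
          have heq : ∫⁻ z, ENNReal.ofReal ‖P z * K u z‖
              = ∫⁻ z, ENNReal.ofReal (P z * K u z) :=
            lintegral_congr fun z => by rw [Real.norm_of_nonneg (hGnn z)]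
          rw [heq, hGtop] at h2
          exact absurd h2 (lt_irrefl ⊤)
        rw [hmfi u]
        exact integral_undef hnotint
    rw [claim x hx, claim x' hx']
    have h1 : 0 ≤ ∏ j, ∫ z, f j z :=
      Finset.prod_nonneg fun j _ => integral_nonneg (hf0 j)
    have h2 : (0:ℝ) ≤ (M*r) ^ (α - (m:ℝ)*(n:ℝ) - 1) := Real.rpow_nonneg hMr.le _
    have h3 : (0:ℝ) ≤ (m:ℝ) * β * 2 ^ (β + 1) := by positivity
    simpa using mul_nonneg (mul_nonneg (mul_nonneg h3 dist_nonneg) h2) h1
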